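/- Define Z_2^j(w) = (2√π)^{-1} Σ_{k ∈ Z_0, k ≠ j} w_k w_{j−k} / (k(k−j)) for j ∈ Z_0 and w ∈ h^m(Z_0), m ≥ 0. Then the map w ↦ (Z_2^j(w))_{j∈Z_0} is a bounded quadratic map from h^m(Z_0) to h^{m+1}(Z_0): ‖Z_2(w)‖_{m+1} ≤ C ‖w‖_m² for some constant C = C(m). -/

import Mathlib

open scoped ENNReal NNReal Real

noncomputable section

/-- The weighted `l²` norm on `h^m(ℤ_0)`: `‖w‖_m² = Σ_{j≠0} |j|^{2m}|w_j|²`. -/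
def Hc (s : ℝ) (w : ℤ → ℂ) : ℝ≥0∞ :=
  (∑' k : ℤ, (k.natAbs : ℝ≥0∞) ^ (2 * s) * (‖w k‖₊ : ℝ≥0∞) ^ 2) ^ ((1 : ℝ) / 2)

/-- The quadratic term of the Birkhoff normal form map for KdV:
`Z₂^j(w) = (2√π)⁻¹ Σ_{k ≠ 0, j} w_k w_{j−k}/(k(k−j))`. -/
def Z2 (w : ℤ → ℂ) (j : ℤ) : ℂ :=
  ((2 * Real.sqrt π)⁻¹ : ℝ) *
    ∑' k : ℤ, if k ≠ 0 ∧ k ≠ j then w k * w (j - k) / ((k : ℂ) * ((k : ℂ) - (j : ℂ))) else 0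

namespace Z2aux

open MeasureTheory

/-- Cauchy–Schwarz for `ℝ≥0∞`-valued sums. -/
lemma cs_tsum (x y : ℤ → ℝ≥0∞) : ∑' k, x k * y k ≤
    (∑' k, x k ^ 2) ^ ((1:ℝ)/2) * (∑' k, y k ^ 2) ^ ((1:ℝ)/2) := by
  have hpq : (2:ℝ).HolderConjugate 2 := Real.HolderConjugate.two_two
  have h := ENNReal.lintegral_mul_le_Lp_mul_Lq (Measure.count : Measure ℤ)
    hpq (measurable_of_countable x).aemeasurable (measurable_of_countable y).aemeasurable
  have h2 : ∀ z : ℝ≥0∞, z ^ (2:ℝ) = z ^ 2 := by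
    intro z
    rw [show (2:ℝ) = ((2:ℕ):ℝ) by norm_num, ENNReal.rpow_natCast]
  simpa [lintegral_count, Pi.mul_apply, h2] using h

lemma mul_le_sq_add_sq (a b : ℝ≥0∞) : a * b ≤ a ^ 2 + b ^ 2 := by
  rcases le_total a b with h | h
  · calc a * b ≤ b * b := mul_le_mul_left h b
      _ = b ^ 2 := (sq b).symm
      _ ≤ _ := le_add_self
  · calc a * b ≤ a * a := mul_le_mul_right h a
      _ = a ^ 2 := (sq a).symm
      _ ≤ _ := le_add_right le_rfl

lemma shift_tsum (g : ℤ → ℝ≥0∞) (k : ℤ) : ∑' j, g (j - k) = ∑' i, g i :=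
  (Equiv.subRight k).tsum_eq g

lemma conv_comm (f g : ℤ → ℝ≥0∞) (j : ℤ) :
    ∑' k, f k * g (j - k) = ∑' k, g k * f (j - k) := by
  rw [← (Equiv.subLeft j).tsum_eq (fun k => g k * f (j - k))]
  exact tsum_congr fun k => by simp [Equiv.subLeft, mul_comm]

/-- Young's inequality `‖f ⋆ g‖₂² ≤ 2 ‖f‖₁² ‖g‖₂²` for `ℝ≥0∞`-valued sequences. -/
lemma young (f g : ℤ → ℝ≥0∞) :
    ∑' j, (∑' k, f k * g (j - k)) ^ 2 ≤ 2 * (∑' k, f k) ^ 2 * ∑' k, g k ^ 2 := by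
  have key : ∀ k l : ℤ, ∑' j, g (j - k) * g (j - l) ≤ 2 * ∑' i, g i ^ 2 := by
    intro k l
    calc ∑' j, g (j - k) * g (j - l) ≤ ∑' j, (g (j - k) ^ 2 + g (j - l) ^ 2) :=
          ENNReal.tsum_le_tsum fun j => mul_le_sq_add_sq _ _
      _ = (∑' j, g (j - k) ^ 2) + ∑' j, g (j - l) ^ 2 := ENNReal.tsum_add
      _ = 2 * ∑' i, g i ^ 2 := by
          rw [shift_tsum (fun i => g i ^ 2) k, shift_tsum (fun i => g i ^ 2) l, two_mul]
  calc ∑' j, (∑' k, f k * g (j - k)) ^ 2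
      = ∑' j, ∑' k, ∑' l, f k * f l * (g (j - k) * g (j - l)) := by
        refine tsum_congr fun j => ?_
        rw [sq, ← ENNReal.tsum_mul_right]
        refine tsum_congr fun k => ?_
        rw [← ENNReal.tsum_mul_left]
        exact tsum_congr fun l => by ring
    _ = ∑' k, ∑' l, f k * f l * ∑' j, g (j - k) * g (j - l) := by
        rw [ENNReal.tsum_comm]
        refine tsum_congr fun k => ?_
        rw [ENNReal.tsum_comm]
        exact tsum_congr fun l => (ENNReal.tsum_mul_left).symm ▸ rfl
    _ ≤ ∑' k, ∑' l, f k * f l * (2 * ∑' i, g i ^ 2) := by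
        refine ENNReal.tsum_le_tsum fun k => ENNReal.tsum_le_tsum fun l =>
          mul_le_mul_right (key k l) _
    _ = 2 * (∑' k, f k) ^ 2 * ∑' k, g k ^ 2 := by
        set S := 2 * ∑' i, g i ^ 2 with hS
        have h1 : ∀ k, ∑' l, f k * f l * S = f k * ((∑' l, f l) * S) := by
          intro k
          simp_rw [mul_assoc]
          rw [ENNReal.tsum_mul_left, ENNReal.tsum_mul_right]
        calc ∑' k, ∑' l, f k * f l * S = ∑' k, f k * ((∑' l, f l) * S) := tsum_congr h1
          _ = (∑' k, f k) * ((∑' l, f l) * S) := ENNReal.tsum_mul_right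
          _ = 2 * (∑' k, f k) ^ 2 * ∑' k, g k ^ 2 := by rw [hS]; ring

lemma enn_tsum_le (F : ℤ → ℂ) : (‖∑' i, F i‖₊ : ℝ≥0∞) ≤ ∑' i, (‖F i‖₊ : ℝ≥0∞) := by
  by_cases h : Summable fun i => ‖F i‖₊
  · rw [← ENNReal.coe_tsum h]
    exact ENNReal.coe_le_coe.2 (nnnorm_tsum_le h)
  · have : (∑' i, (‖F i‖₊ : ℝ≥0∞)) = ∞ := by
      by_contra hne
      exact h (ENNReal.tsum_coe_ne_top_iff_summable.1 hne)
    simp [this]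

/-- `|i|` as an `ℝ≥0∞`. -/
def nn (i : ℤ) : ℝ≥0∞ := (i.natAbs : ℝ≥0∞)

lemma nn_ne_top (i : ℤ) : nn i ≠ ∞ := by simp [nn]

lemma one_le_nn {i : ℤ} (hi : i ≠ 0) : 1 ≤ nn i := by
  have h1 : 1 ≤ i.natAbs := by
    have := Int.natAbs_pos.2 hi
    omega
  exact_mod_cast Nat.one_le_cast.2 h1

lemma nn_ne_zero {i : ℤ} (hi : i ≠ 0) : nn i ≠ 0 :=
  fun h => by exact absurd h (by simpa [nn, Int.natAbs_eq_zero] using hi)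

lemma sqsqrt (u : ℝ≥0∞) : (u ^ ((1:ℝ)/2)) ^ 2 = u := by
  rw [← ENNReal.rpow_natCast (u ^ ((1:ℝ)/2)) 2, ← ENNReal.rpow_mul]
  norm_num

lemma sqrt_sq_enn (u : ℝ≥0∞) : (u ^ 2) ^ ((1:ℝ)/2) = u := by
  rw [← ENNReal.rpow_natCast u 2, ← ENNReal.rpow_mul]
  norm_num

lemma rpow_m_sq (x : ℝ≥0∞) (m : ℝ) : (x ^ m) ^ 2 = x ^ (2 * m) := by
  rw [← ENNReal.rpow_natCast (x ^ m) 2, ← ENNReal.rpow_mul, mul_comm m]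
  norm_num

/-- The kernel estimate: for `j, k, j-k ≠ 0`,
`|j|^{m+1} / (|k||j-k|) ≤ 2^m (|k|^m + |j-k|^m)(|k|⁻¹ + |j-k|⁻¹)`. -/
lemma kernel_bound {m : ℝ} (hm : 0 ≤ m) {j k : ℤ} (hj : j ≠ 0) (hk : k ≠ 0) (hkj : k ≠ j) :
    nn j ^ (m + 1) * ((nn k)⁻¹ * (nn (j - k))⁻¹) ≤
      (2:ℝ≥0∞) ^ m * ((nn k ^ m + nn (j - k) ^ m) * ((nn k)⁻¹ + (nn (j - k))⁻¹)) := by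
  set x := nn k
  set z := nn (j - k)
  have hjk : j - k ≠ 0 := sub_ne_zero.2 (Ne.symm hkj)
  have hx0 : x ≠ 0 := nn_ne_zero hk
  have hz0 : z ≠ 0 := nn_ne_zero hjk
  have hxt : x ≠ ∞ := nn_ne_top k
  have hzt : z ≠ ∞ := nn_ne_top (j - k)
  have htri : nn j ≤ x + z := by
    have h1 : j.natAbs ≤ k.natAbs + (j - k).natAbs := by
      have := Int.natAbs_add_le k (j - k)
      simpa using this
    calc nn j = (j.natAbs : ℝ≥0∞) := rfl
      _ ≤ ((k.natAbs + (j - k).natAbs : ℕ) : ℝ≥0∞) := by exact_mod_cast Nat.cast_le.2 h1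
      _ = x + z := by push_cast; rfl
  have hpow : nn j ^ m ≤ (2:ℝ≥0∞) ^ m * (x ^ m + z ^ m) := by
    calc nn j ^ m ≤ (x + z) ^ m := ENNReal.rpow_le_rpow htri hm
      _ ≤ (2 * max x z) ^ m := by
          refine ENNReal.rpow_le_rpow ?_ hm
          rw [two_mul]
          exact add_le_add (le_max_left _ _) (le_max_right _ _)
      _ = (2:ℝ≥0∞) ^ m * (max x z) ^ m := ENNReal.mul_rpow_of_nonneg _ _ hm
      _ ≤ (2:ℝ≥0∞) ^ m * (x ^ m + z ^ m) := by
          refine mul_le_mul_right ?_ _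
          rcases max_cases x z with ⟨h, _⟩ | ⟨h, _⟩ <;> rw [h]
          · exact le_add_right le_rfl
          · exact le_add_self
  have hsplit : (x + z) * (x⁻¹ * z⁻¹) = x⁻¹ + z⁻¹ := by
    have hxx : x * x⁻¹ = 1 := ENNReal.mul_inv_cancel hx0 hxt
    have hzz : z * z⁻¹ = 1 := ENNReal.mul_inv_cancel hz0 hzt
    have e1 : x * (x⁻¹ * z⁻¹) = z⁻¹ := by rw [← mul_assoc, hxx, one_mul]
    have e2 : z * (x⁻¹ * z⁻¹) = x⁻¹ := by
      rw [mul_comm x⁻¹ z⁻¹, ← mul_assoc, hzz, one_mul]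
    rw [add_mul, e1, e2, add_comm]
  have hnjt : nn j ≠ ∞ := nn_ne_top j
  have hnj0 : nn j ≠ 0 := nn_ne_zero hj
  calc nn j ^ (m + 1) * (x⁻¹ * z⁻¹)
      = nn j ^ m * nn j * (x⁻¹ * z⁻¹) := by
        rw [ENNReal.rpow_add m 1 hnj0 hnjt, ENNReal.rpow_one]
    _ ≤ ((2:ℝ≥0∞) ^ m * (x ^ m + z ^ m)) * (x + z) * (x⁻¹ * z⁻¹) := by
        exact mul_le_mul_left (mul_le_mul' hpow htri) _
    _ = (2:ℝ≥0∞) ^ m * ((x ^ m + z ^ m) * ((x + z) * (x⁻¹ * z⁻¹))) := by ring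
    _ = (2:ℝ≥0∞) ^ m * ((x ^ m + z ^ m) * (x⁻¹ + z⁻¹)) := by rw [hsplit]

/-- `yv i = |i|⁻¹` for `i ≠ 0`, `0` otherwise. -/
def yv (i : ℤ) : ℝ≥0∞ := if i = 0 then 0 else (nn i)⁻¹

lemma K_ne_top : (∑' k : ℤ, yv k ^ 2) ≠ ∞ := by
  have hsum : Summable (fun k : ℤ => if k = 0 then (0:ℝ≥0) else ((k.natAbs : ℝ≥0) ^ 2)⁻¹) := by
    rw [← NNReal.summable_coe]
    have h2 : Summable fun n : ℤ => 1 / (n : ℝ) ^ 2 :=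
      Real.summable_one_div_int_pow.2 one_lt_two
    refine h2.congr fun k => ?_
    by_cases hk : k = 0
    · simp [hk]
    · have habs : ((k.natAbs : ℝ)) ^ 2 = (k : ℝ) ^ 2 := by
        have hcast : ((k.natAbs : ℝ)) = |(k:ℝ)| := by
          rw [← Int.cast_natCast, Int.natCast_natAbs, Int.cast_abs]
        rw [hcast, sq_abs]
      simp [hk, habs, one_div]
  have hco : ∀ k : ℤ, yv k ^ 2
      = ((if k = 0 then (0:ℝ≥0) else ((k.natAbs : ℝ≥0) ^ 2)⁻¹ : ℝ≥0) : ℝ≥0∞) := by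
    intro k
    by_cases hk : k = 0
    · simp [yv, hk]
    · have hne : ((k.natAbs : ℝ≥0)) ≠ 0 := by
        simpa [Nat.cast_ne_zero, Int.natAbs_ne_zero] using hk
      simp only [yv, if_neg hk, nn, ← ENNReal.coe_natCast,
        ← ENNReal.coe_inv hne, ← ENNReal.coe_pow, inv_pow]
  rw [tsum_congr hco]
  exact ENNReal.tsum_coe_ne_top_iff_summable.2 hsum

end Z2aux

open Z2aux

/-- For `m ≥ 0`, the map `w ↦ (Z₂^j(w))_{j∈ℤ_0}` is a bounded quadratic map
from `h^m(ℤ_0)` to `h^{m+1}(ℤ_0)`: `‖Z₂(w)‖_{m+1} ≤ C ‖w‖_m²` for some `C = C(m)`. -/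
theorem Z2_bound (m : ℝ) (hm : 0 ≤ m) :
    ∃ C : ℝ≥0∞, 0 < C ∧ C < ∞ ∧
      ∀ w : ℤ → ℂ, w 0 = 0 → Hc (m + 1) (Z2 w) ≤ C * Hc m w ^ 2 := by
  classical
  set cnn : ℝ≥0∞ := (‖((2 * Real.sqrt π)⁻¹ : ℝ)‖₊ : ℝ≥0∞) with hcnn
  set c1 : ℝ≥0∞ := cnn * (2:ℝ≥0∞) ^ m with hc1
  set K : ℝ≥0∞ := ∑' k : ℤ, yv k ^ 2 with hKdef
  have hc1top : c1 ≠ ∞ :=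
    ENNReal.mul_ne_top ENNReal.coe_ne_top (ENNReal.rpow_ne_top_of_nonneg hm (by norm_num))
  set C₀ : ℝ≥0∞ := 48 * c1 ^ 2 * K with hC0
  have hC0top : C₀ ≠ ∞ := by
    refine ENNReal.mul_ne_top (ENNReal.mul_ne_top (by norm_num) ?_) K_ne_top
    exact ENNReal.pow_ne_top hc1top
  refine ⟨C₀ ^ ((1:ℝ)/2) + 1, lt_of_lt_of_le zero_lt_one le_add_self, ?_, ?_⟩
  · rw [lt_top_iff_ne_top]
    exact ENNReal.add_ne_top.2 ⟨ENNReal.rpow_ne_top_of_nonneg (by norm_num) hC0top,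
      ENNReal.one_ne_top⟩
  intro w hw0
  set a : ℤ → ℝ≥0∞ := fun k => (‖w k‖₊ : ℝ≥0∞) with ha
  set N : ℝ≥0∞ := ∑' k : ℤ, nn k ^ (2 * m) * a k ^ 2 with hN
  set f1 : ℤ → ℝ≥0∞ := fun k => nn k ^ m * a k with hf1
  set g : ℤ → ℝ≥0∞ := fun k => a k * yv k with hg
  set h : ℤ → ℝ≥0∞ := fun k => f1 k * yv k with hh
  have ha0 : a 0 = 0 := by simp [ha, hw0]
  -- pointwise bound
  have hptj : ∀ j : ℤ, nn j ^ (m + 1) * (‖Z2 w j‖₊ : ℝ≥0∞) ≤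
      2 * c1 * ((∑' k, g k * f1 (j - k)) + ∑' k, h k * a (j - k)) := by
    intro j
    by_cases hj : j = 0
    · subst hj
      have h0 : nn (0:ℤ) ^ (m + 1) = 0 := by
        rw [show nn (0:ℤ) = 0 by simp [nn]]
        exact ENNReal.zero_rpow_of_pos (by linarith)
      simp [h0]
    · set t : ℤ → ℝ≥0∞ := fun k =>
        if k ≠ 0 ∧ k ≠ j then a k * a (j - k) * ((nn k)⁻¹ * (nn (j - k))⁻¹) else 0 with ht
      have hknn : ∀ i : ℤ, (‖(i:ℂ)‖₊ : ℝ≥0∞) = nn i := by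
        intro i
        rw [Complex.nnnorm_intCast, ← NNReal.natCast_natAbs]
        simp [nn]
      have hZle : (‖Z2 w j‖₊ : ℝ≥0∞) ≤ cnn * ∑' k, t k := by
        rw [show Z2 w j = ((2 * Real.sqrt π)⁻¹ : ℝ) *
            ∑' k : ℤ, if k ≠ 0 ∧ k ≠ j then
              w k * w (j - k) / ((k:ℂ) * ((k:ℂ) - (j:ℂ))) else 0 from rfl]
        rw [nnnorm_mul, ENNReal.coe_mul, Complex.nnnorm_real]
        refine mul_le_mul' le_rfl ?_
        refine le_trans (enn_tsum_le _) (le_of_eq (tsum_congr fun k => ?_))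
        by_cases hc : k ≠ 0 ∧ k ≠ j
        · obtain ⟨hk0, hkj⟩ := hc
          have hjk0 : j - k ≠ 0 := sub_ne_zero.2 (Ne.symm hkj)
          rw [if_pos ⟨hk0, hkj⟩, ht]
          simp only [if_pos (And.intro hk0 hkj)]
          have hy0 : ((k:ℂ) * ((k:ℂ) - (j:ℂ))) ≠ 0 := by
            refine mul_ne_zero ?_ ?_
            · exact_mod_cast (Int.cast_ne_zero (α := ℂ)).2 hk0
            · rw [sub_ne_zero]
              exact fun hkj' => hkj (by exact_mod_cast hkj')
          have hyn : (‖(k:ℂ) * ((k:ℂ) - (j:ℂ))‖₊ : ℝ≥0∞) = nn k * nn (j - k) := by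
            rw [nnnorm_mul, ENNReal.coe_mul, hknn k]
            congr 1
            rw [show (k:ℂ) - (j:ℂ) = ((k - j : ℤ) : ℂ) by push_cast; ring, hknn (k - j)]
            simp [nn, ← Int.natAbs_neg (k - j), neg_sub]
          rw [nnnorm_div, ENNReal.coe_div (by simpa using hy0), nnnorm_mul, ENNReal.coe_mul,
            hyn, div_eq_mul_inv,
            ENNReal.mul_inv (Or.inl (nn_ne_zero hk0)) (Or.inl (nn_ne_top k))]
        · rw [if_neg hc, ht]
          simp [hc]
      have hper : ∀ k, nn j ^ (m + 1) * t k ≤ (2:ℝ≥0∞) ^ m *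
          (f1 k * g (j - k) + h k * a (j - k) + g k * f1 (j - k) + a k * h (j - k)) := by
        intro k
        by_cases hc : k ≠ 0 ∧ k ≠ j
        · obtain ⟨hk0, hkj⟩ := hc
          have hjk0 : j - k ≠ 0 := sub_ne_zero.2 (Ne.symm hkj)
          rw [ht]
          simp only [if_pos (And.intro hk0 hkj)]
          have hker := kernel_bound hm hj hk0 hkj
          calc nn j ^ (m + 1) * (a k * a (j - k) * ((nn k)⁻¹ * (nn (j - k))⁻¹))
              = (nn j ^ (m + 1) * ((nn k)⁻¹ * (nn (j - k))⁻¹)) * (a k * a (j - k)) := by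
                ring
            _ ≤ ((2:ℝ≥0∞) ^ m * ((nn k ^ m + nn (j - k) ^ m) *
                  ((nn k)⁻¹ + (nn (j - k))⁻¹))) * (a k * a (j - k)) :=
                mul_le_mul_left hker _
            _ = (2:ℝ≥0∞) ^ m *
                (f1 k * g (j - k) + h k * a (j - k) + g k * f1 (j - k) + a k * h (j - k)) := by
                simp only [hf1, hg, hh, yv, if_neg hk0, if_neg hjk0]
                ring
        · rw [ht]
          simp [hc]
      calc nn j ^ (m + 1) * (‖Z2 w j‖₊ : ℝ≥0∞)
          ≤ nn j ^ (m + 1) * (cnn * ∑' k, t k) := mul_le_mul_right hZle _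
        _ = cnn * ∑' k, nn j ^ (m + 1) * t k := by
            rw [ENNReal.tsum_mul_left]; ring
        _ ≤ cnn * ∑' k, (2:ℝ≥0∞) ^ m *
              (f1 k * g (j - k) + h k * a (j - k) + g k * f1 (j - k) + a k * h (j - k)) :=
            mul_le_mul_right (ENNReal.tsum_le_tsum hper) _
        _ = c1 * ((∑' k, f1 k * g (j - k)) + (∑' k, h k * a (j - k))
              + (∑' k, g k * f1 (j - k)) + ∑' k, a k * h (j - k)) := by
            rw [ENNReal.tsum_mul_left, ENNReal.tsum_add, ENNReal.tsum_add, ENNReal.tsum_add,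
              hc1]
            ring
        _ = 2 * c1 * ((∑' k, g k * f1 (j - k)) + ∑' k, h k * a (j - k)) := by
            rw [conv_comm f1 g j, conv_comm a h j]
            ring
  -- norm bounds
  have hf1sq : (∑' k, f1 k ^ 2) = N := by
    refine tsum_congr fun k => ?_
    rw [hf1]
    rw [mul_pow, rpow_m_sq]
  have hasq : (∑' k, a k ^ 2) ≤ N := by
    refine ENNReal.tsum_le_tsum fun k => ?_
    by_cases hk : k = 0
    · simp [hk, ha0]
    · have h1 : (1:ℝ≥0∞) ≤ nn k ^ (2 * m) := by
        calc (1:ℝ≥0∞) = 1 ^ (2 * m) := (ENNReal.one_rpow _).symm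
          _ ≤ nn k ^ (2 * m) := ENNReal.rpow_le_rpow (one_le_nn hk) (by linarith)
      exact le_mul_of_one_le_left (by positivity) h1
  have hgsum : (∑' k, g k) ^ 2 ≤ N * K := by
    have := cs_tsum a yv
    have hle : (∑' k, g k) ≤ N ^ ((1:ℝ)/2) * K ^ ((1:ℝ)/2) := by
      refine le_trans this (mul_le_mul' ?_ le_rfl)
      exact ENNReal.rpow_le_rpow hasq (by norm_num)
    calc (∑' k, g k) ^ 2 ≤ (N ^ ((1:ℝ)/2) * K ^ ((1:ℝ)/2)) ^ 2 := by
          rw [sq, sq]; exact mul_le_mul' hle hle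
      _ = N * K := by rw [mul_pow, sqsqrt, sqsqrt]
  have hhsum : (∑' k, h k) ^ 2 ≤ N * K := by
    have := cs_tsum f1 yv
    have hle : (∑' k, h k) ≤ N ^ ((1:ℝ)/2) * K ^ ((1:ℝ)/2) := by
      refine le_trans this (mul_le_mul' ?_ le_rfl)
      exact ENNReal.rpow_le_rpow (le_of_eq hf1sq) (by norm_num)
    calc (∑' k, h k) ^ 2 ≤ (N ^ ((1:ℝ)/2) * K ^ ((1:ℝ)/2)) ^ 2 := by
          rw [sq, sq]; exact mul_le_mul' hle hle
      _ = N * K := by rw [mul_pow, sqsqrt, sqsqrt]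
  -- main sum bound
  have hmain : (∑' j : ℤ, nn j ^ (2 * (m + 1)) * (‖Z2 w j‖₊ : ℝ≥0∞) ^ 2) ≤ C₀ * N ^ 2 := by
    have hsq3 : ∀ A B : ℝ≥0∞, (A + B) ^ 2 ≤ 3 * (A ^ 2 + B ^ 2) := by
      intro A B
      have he : (A + B) ^ 2 = A ^ 2 + B ^ 2 + 2 * (A * B) := by ring
      rw [he]
      calc A ^ 2 + B ^ 2 + 2 * (A * B) ≤ A ^ 2 + B ^ 2 + 2 * (A ^ 2 + B ^ 2) := by
            exact add_le_add le_rfl (mul_le_mul_right (mul_le_sq_add_sq A B) 2)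
        _ = 3 * (A ^ 2 + B ^ 2) := by ring
    calc ∑' j : ℤ, nn j ^ (2 * (m + 1)) * (‖Z2 w j‖₊ : ℝ≥0∞) ^ 2
        = ∑' j : ℤ, (nn j ^ (m + 1) * (‖Z2 w j‖₊ : ℝ≥0∞)) ^ 2 := by
          refine tsum_congr fun j => ?_
          rw [mul_pow, rpow_m_sq]
      _ ≤ ∑' j : ℤ, (2 * c1 * ((∑' k, g k * f1 (j - k)) + ∑' k, h k * a (j - k))) ^ 2 := by
          refine ENNReal.tsum_le_tsum fun j => ?_
          rw [sq, sq]; exact mul_le_mul' (hptj j) (hptj j)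
      _ ≤ ∑' j : ℤ, (2 * c1) ^ 2 *
            (3 * ((∑' k, g k * f1 (j - k)) ^ 2 + (∑' k, h k * a (j - k)) ^ 2)) := by
          refine ENNReal.tsum_le_tsum fun j => ?_
          rw [mul_pow]
          exact mul_le_mul_right (hsq3 _ _) _
      _ = (2 * c1) ^ 2 * 3 * ((∑' j : ℤ, (∑' k, g k * f1 (j - k)) ^ 2)
            + ∑' j : ℤ, (∑' k, h k * a (j - k)) ^ 2) := by
          rw [← ENNReal.tsum_add, ← ENNReal.tsum_mul_left]
          refine tsum_congr fun j => by ring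
      _ ≤ (2 * c1) ^ 2 * 3 * ((2 * (∑' k, g k) ^ 2 * ∑' k, f1 k ^ 2)
            + 2 * (∑' k, h k) ^ 2 * ∑' k, a k ^ 2) := by
          exact mul_le_mul_right (add_le_add (young g f1) (young h a)) _
      _ ≤ (2 * c1) ^ 2 * 3 * ((2 * (N * K) * N) + 2 * (N * K) * N) := by
          refine mul_le_mul_right (add_le_add ?_ ?_) _
          · rw [hf1sq]
            exact mul_le_mul_left (mul_le_mul_right hgsum 2) N
          · exact mul_le_mul (mul_le_mul_right hhsum 2) hasq (by positivity) (by positivity)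
      _ = C₀ * N ^ 2 := by rw [hC0]; ring
  -- conclude
  have hHc : Hc (m + 1) (Z2 w) =
      (∑' j : ℤ, nn j ^ (2 * (m + 1)) * (‖Z2 w j‖₊ : ℝ≥0∞) ^ 2) ^ ((1:ℝ)/2) := rfl
  have hHm : Hc m w ^ 2 = N := by
    have : Hc m w = N ^ ((1:ℝ)/2) := rfl
    rw [this, sqsqrt]
  rw [hHc, hHm]
  calc (∑' j : ℤ, nn j ^ (2 * (m + 1)) * (‖Z2 w j‖₊ : ℝ≥0∞) ^ 2) ^ ((1:ℝ)/2)
      ≤ (C₀ * N ^ 2) ^ ((1:ℝ)/2) := ENNReal.rpow_le_rpow hmain (by norm_num)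
    _ = C₀ ^ ((1:ℝ)/2) * N := by
        rw [ENNReal.mul_rpow_of_nonneg _ _ (by norm_num : (0:ℝ) ≤ 1/2), sqrt_sq_enn]
    _ ≤ (C₀ ^ ((1:ℝ)/2) + 1) * N := mul_le_mul_left le_self_add N
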